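/- arXiv:math/0012173 — 2 statements merged into one kernel-verified Lean document; each statement's English description precedes it below -/
import Mathlib

section
/- Let C be a category with object A such that every arrow in C is a strict epimorphism, every object X admits an arrow A → X, and Hom(A, -) preserves strict epimorphisms. Then for every object X, the right action of the group Aut(A) on the set Hom(A, X) by precomposition is transitive. -/
open CategoryTheory

universe v u

/-- Grothendieck strict epimorphism. -/
def IsStrictEpi {C : Type u} [Category.{v} C] {X Y : C} (f : X ⟶ Y) : Prop :=
  ∀ {Z : C} (g : X ⟶ Z),
    (∀ {W : C} (s t : W ⟶ X), s ≫ f = t ≫ f → s ≫ g = t ≫ g) →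
    ∃! h : Y ⟶ Z, f ≫ h = g

lemma IsStrictEpi.epi {C : Type u} [Category.{v} C] {X Y : C} {f : X ⟶ Y}
    (hf : IsStrictEpi f) : Epi f := by
  constructor
  intro Z u v huv
  obtain ⟨h, -, huniq⟩ := hf (f ≫ u)
    (fun s t hst => by rw [← Category.assoc, ← Category.assoc, hst])
  exact (huniq u rfl).trans (huniq v huv.symm).symm

/-- The right action of `Aut(A)` on `Hom(A, X)` by precomposition is transitive. -/
theorem stmt2 {C : Type u} [Category.{v} C] (A : C)
    (h1 : ∀ {X Y : C} (f : X ⟶ Y), IsStrictEpi f)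
    (h2 : ∀ X : C, Nonempty (A ⟶ X))
    (h3 : ∀ {X Y : C} (f : X ⟶ Y), IsStrictEpi f →
      IsStrictEpi (C := Type v) (X := A ⟶ X) (Y := A ⟶ Y) (TypeCat.ofHom (fun g : A ⟶ X => g ≫ f))) :
    ∀ (X : C) (x y : A ⟶ X), ∃ h : A ≅ A, h.hom ≫ x = y := by
  have surj : ∀ {X Y : C} (f : X ⟶ Y),
      Function.Surjective (fun g : A ⟶ X => g ≫ f) := by
    intro X Y f
    exact (ofHom_epi_iff_surjective _).mp (IsStrictEpi.epi (h3 f (h1 f)))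
  intro X x y
  obtain ⟨g, hg⟩ := surj x y
  obtain ⟨u, hu⟩ := surj g (𝟙 A)
  obtain ⟨w, hw⟩ := surj u (𝟙 A)
  simp only at hg hu hw
  have hwg : w = g := by
    calc w = w ≫ u ≫ g := by rw [hu, Category.comp_id]
    _ = (w ≫ u) ≫ g := by rw [Category.assoc]
    _ = g := by rw [hw, Category.id_comp]
  exact ⟨⟨g, u, by rw [← hwg, hw], hu⟩, hg⟩
end

section
/- Let C, F be as in the localic Galois setup. In the site defining lAut(F), given generators [(X,⟨x₀|x₁⟩)] and [(Y,⟨y₀|y₁⟩)], if some cover {[A_α] → [(X,⟨x₀|x₁⟩)]} satisfies [A_α] ≤ [(Y,⟨y₀|y₁⟩)] for all α, then already [(X,⟨x₀|x₁⟩)] ≤ [(Y,⟨y₀|y₁⟩)] in D_{ΔF}; equivalently, the map from D_{ΔF} to lAut(F) given by sheafification is full. Consequently (Lifting Lemma): for x ∈ F X and y ∈ F Y, if lFix(x) ≤ lFix(y) in lAut(F) then there is a unique arrow f : X → Y in C with F(f)(x) = y. -/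
open CategoryTheory

universe v u

open scoped Classical

variable {C : Type u} [Category.{v} C]

/-- The order of the poset `D_{ΔF}` of pairs `(X, (x₀, x₁))`, `x₀ x₁ ∈ F X`. -/
def dle (F : C ⥤ Type v) (a b : Σ X : C, F.obj X × F.obj X) : Prop :=
  ∃ f : a.1 ⟶ b.1, F.map f a.2.1 = b.2.1 ∧ F.map f a.2.2 = b.2.2

/-- The order of the meet-semilattice `D(D_{ΔF})` of finite subsets of `D_{ΔF}`:
`[A] ≤ [B]` iff each generator of `B` is above some generator of `A`. -/
def lle (F : C ⥤ Type v) (A B : Finset (Σ X : C, F.obj X × F.obj X)) : Prop :=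
  ∀ b ∈ B, ∃ a ∈ A, dle F a b

/-- The covers of the pretopology on the site `D(D_{ΔF})` generated by the Wraith
covers forcing a natural relation to be a bijection: isomorphism covers, pullbacks
(meet = union of finite subsets), and composition. -/
inductive GCov (F : C ⥤ Type v) :
    Finset (Σ X : C, F.obj X × F.obj X) → Set (Finset (Σ X : C, F.obj X × F.obj X)) → Prop
  | empty_left (X : C) (x y z : F.obj X) (h : x ≠ y) :
      GCov F {⟨X, (x, z)⟩, ⟨X, (y, z)⟩} ∅
  | empty_right (X : C) (x y z : F.obj X) (h : x ≠ y) :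
      GCov F {⟨X, (z, x)⟩, ⟨X, (z, y)⟩} ∅
  | total_left (X : C) (z : F.obj X) :
      GCov F ∅ {S | ∃ x : F.obj X, S = {⟨X, (x, z)⟩}}
  | total_right (X : C) (z : F.obj X) :
      GCov F ∅ {S | ∃ x : F.obj X, S = {⟨X, (z, x)⟩}}
  | iso (u v : Finset (Σ X : C, F.obj X × F.obj X)) (h₁ : lle F u v) (h₂ : lle F v u) :
      GCov F u {v}
  | pull (u : Finset (Σ X : C, F.obj X × F.obj X))
      (S : Set (Finset (Σ X : C, F.obj X × F.obj X))) (h : GCov F u S)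
      (w : Finset (Σ X : C, F.obj X × F.obj X)) (hw : lle F w u) :
      GCov F w {t | ∃ s ∈ S, t = s ∪ w}
  | trans (u : Finset (Σ X : C, F.obj X × F.obj X))
      (S : Set (Finset (Σ X : C, F.obj X × F.obj X))) (h : GCov F u S)
      (T : Finset (Σ X : C, F.obj X × F.obj X) → Set (Finset (Σ X : C, F.obj X × F.obj X)))
      (hT : ∀ s ∈ S, GCov F s (T s)) :
      GCov F u {t | ∃ s ∈ S, t ∈ T s}

/-- A strict epimorphism of types is surjective. -/
lemma strictEpi_surj {A B : Type v} {φ : A ⟶ B} (h : IsStrictEpi (C := Type v) φ) :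
    Function.Surjective φ := by
  obtain ⟨h0, hh0, huniq⟩ := h (Z := ULift.{v} Prop) (TypeCat.ofHom fun _ => ⟨True⟩)
    (fun s t _ => by ext; rfl)
  have e1 : TypeCat.ofHom (fun _ : B => (⟨True⟩ : ULift.{v} Prop)) = h0 :=
    (huniq (TypeCat.ofHom fun _ => ⟨True⟩) (by ext; rfl))
  have e2 : TypeCat.ofHom (fun b : B => (⟨∃ a, φ a = b⟩ : ULift.{v} Prop)) = h0 :=
    (huniq (TypeCat.ofHom fun b => ⟨∃ a, φ a = b⟩)
      (by ext a; exact iff_of_true (⟨a, rfl⟩ : ∃ a', φ a' = φ a) trivial))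
  intro b
  have : (∃ a, φ a = b) = True := congrArg (fun k => (k b).down) (e2.trans e1.symm)
  exact of_eq_true this

/-- If the category of elements is a poset, two parallel arrows of `C` agreeing on one
element of `F` are equal. -/
lemma hom_ext' (F : C ⥤ Type v)
    (hposet : ∀ (a b : F.Elements) (u' v' : a ⟶ b), u' = v')
    {V Y : C} (p q : V ⟶ Y) (v : F.obj V) (h : F.map p v = F.map q v) : p = q :=
  congrArg Subtype.val (hposet ⟨V, v⟩ ⟨Y, F.map p v⟩ ⟨p, rfl⟩ ⟨q, h.symm⟩)

lemma dle_trans (F : C ⥤ Type v) {a b c : Σ X : C, F.obj X × F.obj X}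
    (h₁ : dle F a b) (h₂ : dle F b c) : dle F a c := by
  obtain ⟨f, hf1, hf2⟩ := h₁
  obtain ⟨g, hg1, hg2⟩ := h₂
  exact ⟨f ≫ g, by rw [FunctorToTypes.map_comp_apply, hf1, hg1],
    by rw [FunctorToTypes.map_comp_apply, hf2, hg2]⟩

lemma dle_refl (F : C ⥤ Type v) (a : Σ X : C, F.obj X × F.obj X) : dle F a a :=
  ⟨𝟙 a.1, FunctorToTypes.map_id_apply F a.2.1, FunctorToTypes.map_id_apply F a.2.2⟩

/-- The key induction over the generated pretopology. -/
lemma gcov_key (F : C ⥤ Type v)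
    (h1 : ∀ {X Y : C} (f : X ⟶ Y), IsStrictEpi f)
    (hpro : IsCofiltered F.Elements)
    (hposet : ∀ (a b : F.Elements) (u' v' : a ⟶ b), u' = v')
    (h3 : ∀ {X Y : C} (f : X ⟶ Y), IsStrictEpi f →
      IsStrictEpi (C := Type v) (X := F.obj X) (Y := F.obj Y) (F.map f))
    {u : Finset (Σ X : C, F.obj X × F.obj X)}
    {S : Set (Finset (Σ X : C, F.obj X × F.obj X))} (h : GCov F u S) :
    ∀ (b c : Σ X : C, F.obj X × F.obj X), (∀ a ∈ u, dle F c a) →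
      (∀ B ∈ S, ∀ c', dle F c' c → (∀ a ∈ B, dle F c' a) → dle F c' b) →
      dle F c b := by
  haveI := hpro
  induction h with
  | empty_left X x y z hxy =>
    intro b c hc _
    obtain ⟨f, hf1, hf2⟩ := hc ⟨X, (x, z)⟩ (Finset.mem_insert_self _ _)
    obtain ⟨g, hg1, hg2⟩ := hc ⟨X, (y, z)⟩
      (Finset.mem_insert_of_mem (Finset.mem_singleton_self _))
    have hfg : f = g := hom_ext' F hposet f g c.2.2 (hf2.trans hg2.symm)
    have hf1' : F.map f c.2.1 = x := hf1
    have hg1' : F.map g c.2.1 = y := hg1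
    exact absurd (hf1'.symm.trans (by rw [hfg]; exact hg1')) hxy
  | empty_right X x y z hxy =>
    intro b c hc _
    obtain ⟨f, hf1, hf2⟩ := hc ⟨X, (z, x)⟩ (Finset.mem_insert_self _ _)
    obtain ⟨g, hg1, hg2⟩ := hc ⟨X, (z, y)⟩
      (Finset.mem_insert_of_mem (Finset.mem_singleton_self _))
    have hfg : f = g := hom_ext' F hposet f g c.2.1 (hf1.trans hg1.symm)
    have hf2' : F.map f c.2.2 = x := hf2
    have hg2' : F.map g c.2.2 = y := hg2
    exact absurd (hf2'.symm.trans (by rw [hfg]; exact hg2')) hxy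
  | total_left X z =>
    intro b c _ hS
    obtain ⟨Z, z₀, z₁⟩ := c
    set m := IsCofiltered.min (F.elementsMk Z z₁) (F.elementsMk X z) with hm
    obtain ⟨f, hf⟩ := IsCofiltered.minToLeft (F.elementsMk Z z₁) (F.elementsMk X z)
    obtain ⟨g, hg⟩ := IsCofiltered.minToRight (F.elementsMk Z z₁) (F.elementsMk X z)
    have hf : F.map f m.2 = z₁ := hf
    have hg : F.map g m.2 = z := hg
    obtain ⟨w₀, hw₀⟩ := strictEpi_surj (h3 f (h1 f)) z₀
    have H : ∀ w', F.map f w' = z₀ →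
        ∃ h' : m.1 ⟶ b.1, F.map h' w' = b.2.1 ∧ F.map h' m.2 = b.2.2 := by
      intro w' hw'
      refine hS {⟨X, (F.map g w', z)⟩} ⟨F.map g w', rfl⟩ ⟨m.1, (w', m.2)⟩
        ⟨f, hw', hf⟩ ?_
      intro a ha
      rw [Finset.mem_singleton] at ha
      subst ha
      exact ⟨g, rfl, hg⟩
    obtain ⟨hh, hh₀, hh₁⟩ := H w₀ hw₀
    have hfib : ∀ w', F.map f w' = z₀ → F.map hh w' = b.2.1 := by
      intro w' hw'
      obtain ⟨h', hh₀', hh₁'⟩ := H w' hw'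
      have : h' = hh := hom_ext' F hposet h' hh m.2 (hh₁'.trans hh₁.symm)
      rw [← this]; exact hh₀'
    obtain ⟨k, hk, -⟩ := h1 f hh (by
      intro V s t hst
      obtain ⟨v, hv⟩ := strictEpi_surj (h3 (s ≫ f) (h1 _)) z₀
      have hsv : F.map f (F.map s v) = z₀ := by
        rw [← FunctorToTypes.map_comp_apply]; exact hv
      have htv : F.map f (F.map t v) = z₀ := by
        rw [← FunctorToTypes.map_comp_apply, ← hst]; exact hv
      refine hom_ext' F hposet _ _ v ?_
      rw [FunctorToTypes.map_comp_apply, FunctorToTypes.map_comp_apply,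
        hfib _ hsv, hfib _ htv])
    refine ⟨k, ?_, ?_⟩
    · show F.map k z₀ = b.2.1
      rw [← hw₀, ← FunctorToTypes.map_comp_apply, hk]
      exact hh₀
    · show F.map k z₁ = b.2.2
      rw [← hf, ← FunctorToTypes.map_comp_apply, hk]
      exact hh₁
  | total_right X z =>
    intro b c _ hS
    obtain ⟨Z, z₀, z₁⟩ := c
    set m := IsCofiltered.min (F.elementsMk Z z₀) (F.elementsMk X z) with hm
    obtain ⟨f, hf⟩ := IsCofiltered.minToLeft (F.elementsMk Z z₀) (F.elementsMk X z)
    obtain ⟨g, hg⟩ := IsCofiltered.minToRight (F.elementsMk Z z₀) (F.elementsMk X z)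
    have hf : F.map f m.2 = z₀ := hf
    have hg : F.map g m.2 = z := hg
    obtain ⟨w₁, hw₁⟩ := strictEpi_surj (h3 f (h1 f)) z₁
    have H : ∀ w', F.map f w' = z₁ →
        ∃ h' : m.1 ⟶ b.1, F.map h' m.2 = b.2.1 ∧ F.map h' w' = b.2.2 := by
      intro w' hw'
      refine hS {⟨X, (z, F.map g w')⟩} ⟨F.map g w', rfl⟩ ⟨m.1, (m.2, w')⟩
        ⟨f, hf, hw'⟩ ?_
      intro a ha
      rw [Finset.mem_singleton] at ha
      subst ha
      exact ⟨g, hg, rfl⟩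
    obtain ⟨hh, hh₀, hh₁⟩ := H w₁ hw₁
    have hfib : ∀ w', F.map f w' = z₁ → F.map hh w' = b.2.2 := by
      intro w' hw'
      obtain ⟨h', hh₀', hh₁'⟩ := H w' hw'
      have : h' = hh := hom_ext' F hposet h' hh m.2 (hh₀'.trans hh₀.symm)
      rw [← this]; exact hh₁'
    obtain ⟨k, hk, -⟩ := h1 f hh (by
      intro V s t hst
      obtain ⟨v, hv⟩ := strictEpi_surj (h3 (s ≫ f) (h1 _)) z₁
      have hsv : F.map f (F.map s v) = z₁ := by
        rw [← FunctorToTypes.map_comp_apply]; exact hv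
      have htv : F.map f (F.map t v) = z₁ := by
        rw [← FunctorToTypes.map_comp_apply, ← hst]; exact hv
      refine hom_ext' F hposet _ _ v ?_
      rw [FunctorToTypes.map_comp_apply, FunctorToTypes.map_comp_apply,
        hfib _ hsv, hfib _ htv])
    refine ⟨k, ?_, ?_⟩
    · show F.map k z₀ = b.2.1
      rw [← hf, ← FunctorToTypes.map_comp_apply, hk]
      exact hh₀
    · show F.map k z₁ = b.2.2
      rw [← hw₁, ← FunctorToTypes.map_comp_apply, hk]
      exact hh₁
  | iso u v h₁ h₂ =>
    intro b c hc hS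
    refine hS v rfl c (dle_refl F c) ?_
    intro a ha
    obtain ⟨a', ha', haa⟩ := h₁ a ha
    exact dle_trans F (hc a' ha') haa
  | pull u S hUS w hw ih =>
    intro b c hc hS
    refine ih b c ?_ ?_
    · intro a ha
      obtain ⟨a', ha', haa⟩ := hw a ha
      exact dle_trans F (hc a' ha') haa
    · intro B hB c' hc'c hc'B
      refine hS (B ∪ w) ⟨B, hB, rfl⟩ c' hc'c ?_
      intro a ha
      rcases Finset.mem_union.1 ha with h | h
      · exact hc'B a h
      · exact dle_trans F hc'c (hc a h)
  | trans u S hUS T hT ih ihT =>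
    intro b c hc hS
    refine ih b c hc ?_
    intro B hB c' hc'c hc'B
    refine ihT B hB b c' hc'B ?_
    intro t ht c'' hc''c' hc''t
    exact hS t ⟨B, hB, ht⟩ c'' (dle_trans F hc''c' hc'c) hc''t

/-- Galois theorem of localic Galois theory: if some cover of the generator
`[(X,⟨x₀|x₁⟩)]` has every member below `[(Y,⟨y₀|y₁⟩)]` (i.e. the sheafified
generators satisfy `#[(X,⟨x₀|x₁⟩)] ≤ #[(Y,⟨y₀|y₁⟩)]` in `lAut(F)`), then already
`[(X,⟨x₀|x₁⟩)] ≤ [(Y,⟨y₀|y₁⟩)]` in `D_{ΔF}`: sheafification is full on `D_{ΔF}`.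
Consequently (Lifting Lemma): if `lFix(x) ≤ lFix(y)` in `lAut(F)` then there is a
unique `f : X ⟶ Y` with `F(f)(x) = y`. -/
theorem stmt19 (F : C ⥤ Type v)
    (h1 : ∀ {X Y : C} (f : X ⟶ Y), IsStrictEpi f)
    (h2 : ∀ X : C, Nonempty (F.obj X))
    (hpro : IsCofiltered F.Elements)
    (hposet : ∀ (a b : F.Elements) (u' v' : a ⟶ b), u' = v')
    (h3 : ∀ {X Y : C} (f : X ⟶ Y), IsStrictEpi f →
      IsStrictEpi (C := Type v) (X := F.obj X) (Y := F.obj Y) (F.map f)) :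
    (∀ (X Y : C) (x₀ x₁ : F.obj X) (y₀ y₁ : F.obj Y),
      (∃ S, GCov F {⟨X, (x₀, x₁)⟩} S ∧ ∀ B ∈ S, lle F B {⟨Y, (y₀, y₁)⟩}) →
      dle F ⟨X, (x₀, x₁)⟩ ⟨Y, (y₀, y₁)⟩) ∧
    (∀ (X Y : C) (x : F.obj X) (y : F.obj Y),
      (∃ S, GCov F {⟨X, (x, x)⟩} S ∧ ∀ B ∈ S, lle F B {⟨Y, (y, y)⟩}) →
      ∃! f : X ⟶ Y, F.map f x = y) := by
  have main : ∀ (X Y : C) (x₀ x₁ : F.obj X) (y₀ y₁ : F.obj Y),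
      (∃ S, GCov F {⟨X, (x₀, x₁)⟩} S ∧ ∀ B ∈ S, lle F B {⟨Y, (y₀, y₁)⟩}) →
      dle F ⟨X, (x₀, x₁)⟩ ⟨Y, (y₀, y₁)⟩ := by
    intro X Y x₀ x₁ y₀ y₁ ⟨S, hcov, hle⟩
    refine gcov_key F h1 hpro hposet h3 hcov ⟨Y, (y₀, y₁)⟩ ⟨X, (x₀, x₁)⟩ ?_ ?_
    · intro a ha
      rw [Finset.mem_singleton] at ha
      subst ha
      exact dle_refl F _
    · intro B hB c' _ hc'B
      obtain ⟨a, haB, hab⟩ := hle B hB ⟨Y, (y₀, y₁)⟩ (Finset.mem_singleton_self _)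
      exact dle_trans F (hc'B a haB) hab
  refine ⟨main, ?_⟩
  intro X Y x y hex
  obtain ⟨f, hf1, hf2⟩ := main X Y x x y y hex
  refine ⟨f, hf1, ?_⟩
  intro g hg
  exact hom_ext' F hposet g f x (hg.trans hf1.symm)
end
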